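/- Let k be a field of characteristic ≠ 2 and m ≥ 2 an integer coprime to char k, a, b ∈ k^×, and A = k[T]/(T^m + b/a). Then the trace form Tr_{A/k}(x²) is: ⟨m⟩ + ((m-1)/2)·h in GW(k) if m is odd, and ⟨m⟩ + ⟨-mab⟩ + ((m-2)/2)·h if m is even. -/

import Mathlib

open Polynomial AdjoinRoot



private lemma aux_not_dvd {m x : ℕ} (hx0 : 0 < x) (hx2 : x < 2 * m) (hxm : x ≠ m) : ¬ m ∣ x := by
  rintro ⟨t, rfl⟩
  rcases Nat.lt_or_ge t 2 with h | h
  · interval_cases t <;> omega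
  · have : m * 2 ≤ m * t := Nat.mul_le_mul_left m h
    omega

private lemma trace_root_pow {k : Type*} [Field k] {m : ℕ} (hm : 1 ≤ m) (c : k) (n : ℕ) :
    Algebra.trace k (AdjoinRoot (X ^ m + C c)) (root (X ^ m + C c) ^ n)
      = if m ∣ n then (m : k) * (-c) ^ (n / m) else 0 := by
  classical
  have hmon : (X ^ m + C c).Monic := monic_X_pow_add_C c (by omega)
  have hf0 : (X ^ m + C c) ≠ 0 := hmon.ne_zero
  set f : k[X] := X ^ m + C c with hf
  set pb := AdjoinRoot.powerBasis hf0 with hpb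
  have hdim : pb.dim = m := by
    simp [hpb, AdjoinRoot.powerBasis_dim, hf, natDegree_X_pow_add_C]
  have hrootm : root f ^ m = algebraMap k (AdjoinRoot f) (-c) := by
    have h0 := AdjoinRoot.eval₂_root f
    rw [hf] at h0
    simp only [eval₂_add, eval₂_pow, eval₂_X, eval₂_C] at h0
    rw [map_neg, AdjoinRoot.algebraMap_eq]
    exact eq_neg_of_add_eq_zero_left h0
  have key : ∀ s, root f ^ s = (-c) ^ (s / m) • root f ^ (s % m) := by
    intro s
    induction s using Nat.strong_induction_on with
    | _ s ih =>
      by_cases hs : s < m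
      · rw [Nat.div_eq_of_lt hs, Nat.mod_eq_of_lt hs, pow_zero, one_smul]
      · push_neg at hs
        have h1 : s = (s - m) + m := by omega
        rw [h1, pow_add, hrootm, ih (s - m) (by omega),
          Nat.add_div_right _ (by omega), Nat.add_mod_right, pow_succ,
          Algebra.smul_def, Algebra.smul_def, map_mul]
        ring
  have hrepr : ∀ (s : ℕ) (i : Fin pb.dim),
      pb.basis.repr (root f ^ s) i
        = (-c) ^ (s / m) * (if s % m = (i : ℕ) then 1 else 0) := by
    intro s i
    have hsm : s % m < pb.dim := by rw [hdim]; exact Nat.mod_lt _ (by omega)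
    have hb : root f ^ (s % m) = pb.basis ⟨s % m, hsm⟩ := by
      rw [PowerBasis.coe_basis]
      simp [hpb]
    rw [key s, hb, map_smul, Module.Basis.repr_self]
    simp [Finsupp.single_apply, Fin.ext_iff, eq_comm]
  rw [Algebra.trace_eq_matrix_trace pb.basis, Matrix.trace]
  have hdiag : ∀ i : Fin pb.dim, (Algebra.leftMulMatrix pb.basis (root f ^ n)).diag i
      = (-c) ^ ((n + i) / m) * (if (n + (i : ℕ)) % m = (i : ℕ) then 1 else 0) := by
    intro i
    rw [Matrix.diag_apply, Algebra.leftMulMatrix_eq_repr_mul]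
    have hbi : pb.basis i = root f ^ (i : ℕ) := by
      rw [PowerBasis.coe_basis]; simp [hpb]
    rw [hbi, ← pow_add, hrepr]
  rw [Finset.sum_congr rfl fun i _ => hdiag i]
  by_cases hdvd : m ∣ n
  · obtain ⟨q, rfl⟩ := hdvd
    rw [if_pos ⟨q, rfl⟩]
    have hterm : ∀ i : Fin pb.dim,
        (-c) ^ ((m * q + (i : ℕ)) / m) * (if (m * q + (i : ℕ)) % m = (i : ℕ) then 1 else 0)
          = (-c) ^ q := by
      intro i
      have him : (i : ℕ) < m := hdim ▸ i.2
      have h1 : (m * q + (i : ℕ)) / m = q := by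
        rw [Nat.mul_add_div (by omega)]
        simp [Nat.div_eq_of_lt him]
      have h2 : (m * q + (i : ℕ)) % m = (i : ℕ) := by
        rw [Nat.mul_add_mod, Nat.mod_eq_of_lt him]
      rw [h1, h2, if_pos rfl, mul_one]
    rw [Finset.sum_congr rfl fun i _ => hterm i, Finset.sum_const, Finset.card_univ,
      Fintype.card_fin, hdim, nsmul_eq_mul]
    congr 1
    rw [Nat.mul_div_cancel_left q (by omega)]
  · rw [if_neg hdvd]
    refine Finset.sum_eq_zero fun i _ => ?_
    have him : (i : ℕ) < m := hdim ▸ i.2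
    have hne : ¬ (n + (i : ℕ)) % m = (i : ℕ) := by
      intro h
      apply hdvd
      have h3 : (i : ℕ) % m = (n + (i : ℕ)) % m := by rw [h, Nat.mod_eq_of_lt him]
      have h4 := (Nat.modEq_iff_dvd' (Nat.le_add_left (i : ℕ) n)).mp h3
      simpa using h4
    rw [if_neg hne, mul_zero]

private lemma traceForm_equiv_weighted {k B : Type*} [Field k] [Invertible (2 : k)]
    [CommRing B] [Algebra k B] {ι : Type*} [Fintype ι] [Nonempty ι]
    {v : ι → B} {w : ι → k}
    (hcard : Fintype.card ι = Module.finrank k B)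
    (horth : ∀ i j, i ≠ j → Algebra.traceForm k B (v i) (v j) = 0)
    (hdiag : ∀ i, Algebra.traceForm k B (v i) (v i) = w i)
    (hw : ∀ i, w i ≠ 0) :
    QuadraticMap.Equivalent (Algebra.traceForm k B).toQuadraticMap
      (QuadraticMap.weightedSumSquares k w) := by
  classical
  have hli : LinearIndependent k v :=
    LinearMap.BilinForm.linearIndependent_of_iIsOrtho
      (LinearMap.BilinForm.iIsOrtho_def.mpr horth)
      (fun i h => hw i (by rw [← hdiag i]; exact h))
  let bs : Module.Basis ι k B := basisOfLinearIndependentOfCardEqFinrank hli hcard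
  have hbs : ⇑bs = v := coe_basisOfLinearIndependentOfCardEqFinrank hli hcard
  have hassoc : QuadraticMap.associated (R := k) (Algebra.traceForm k B).toQuadraticMap
      = Algebra.traceForm k B :=
    QuadraticMap.associated_left_inverse k (fun x y => by
      rw [Algebra.traceForm_apply, Algebra.traceForm_apply, mul_comm])
  have horth' : (QuadraticMap.associated (R := k)
      (Algebra.traceForm k B).toQuadraticMap).IsOrthoᵢ bs := by
    intro i j hij
    show QuadraticMap.associated (R := k) (Algebra.traceForm k B).toQuadraticMap (bs i) (bs j) = 0
    rw [hassoc]
    have h1 : bs i = v i := congrFun hbs i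
    have h2 : bs j = v j := congrFun hbs j
    rw [h1, h2]
    exact horth i j hij
  have h1 : QuadraticMap.Equivalent (Algebra.traceForm k B).toQuadraticMap
      ((Algebra.traceForm k B).toQuadraticMap.basisRepr bs) :=
    ⟨QuadraticMap.isometryEquivBasisRepr _ bs⟩
  rw [QuadraticMap.basisRepr_eq_of_iIsOrtho _ _ horth'] at h1
  have hwq : (fun i => (Algebra.traceForm k B).toQuadraticMap (bs i)) = w := by
    funext i
    rw [congrFun hbs i, LinearMap.BilinMap.toQuadraticMap_apply, hdiag]
  rwa [hwq] at h1

open Polynomial in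
/-- Let `k` be a field of characteristic `≠ 2`, `m ≥ 2` an integer coprime to `char k`,
`a, b ∈ kˣ`, and `A = k[T]/(T^m + b/a)`. Then the trace form `x ↦ Tr_{A/k}(x²)` is
`⟨m⟩ + ((m-1)/2)·h` in `GW(k)` if `m` is odd, and `⟨m⟩ + ⟨-mab⟩ + ((m-2)/2)·h` if `m` is
even; equality in `GW(k)` is expressed as an equivalence of quadratic forms with the
corresponding diagonal quadratic form (`h = ⟨1⟩ + ⟨-1⟩` contributing weight pairs
`1, -1`). -/
theorem statement17 {k : Type*} [Field k] (hchar : ringChar k ≠ 2)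
    (m : ℕ) (hm : 2 ≤ m) (hmk : (m : k) ≠ 0) (a b : kˣ)
    (A : Type*) [CommRing A] [Algebra k A]
    (hA : Nonempty (A ≃ₐ[k] AdjoinRoot (X ^ m + C ((b : k) / (a : k))))) :
    (Odd m →
      QuadraticMap.Equivalent
        ((Algebra.traceForm k A).toQuadraticMap)
        (QuadraticMap.weightedSumSquares k
          (fun i : Fin m => if i.1 = 0 then (m : k) else if Even i.1 then 1 else -1))) ∧
    (Even m →
      QuadraticMap.Equivalent
        ((Algebra.traceForm k A).toQuadraticMap)
        (QuadraticMap.weightedSumSquares k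
          (fun i : Fin m => if i.1 = 0 then (m : k)
            else if i.1 = 1 then -((m : k) * (a : k) * (b : k))
            else if Even i.1 then 1 else -1))) := by
  classical
  obtain ⟨e⟩ := hA
  set c : k := (b : k) / (a : k) with hc_def
  have ha0 : (a : k) ≠ 0 := a.ne_zero
  have hb0 : (b : k) ≠ 0 := b.ne_zero
  have hc0 : c ≠ 0 := div_ne_zero hb0 ha0
  have h2 : (2 : k) ≠ 0 := Ring.two_ne_zero hchar
  haveI : Invertible (2 : k) := invertibleOfNonzero h2
  have hm1 : 1 ≤ m := by omega
  haveI : Nonempty (Fin m) := ⟨⟨0, by omega⟩⟩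
  set f : k[X] := X ^ m + C c with hf
  set B := AdjoinRoot f with hB
  have tr := trace_root_pow (k := k) hm1 c
  have T2 : ∀ s t : ℕ, Algebra.traceForm k B (root f ^ s) (root f ^ t)
      = if m ∣ (s + t) then (m : k) * (-c) ^ ((s + t) / m) else 0 := by
    intro s t
    rw [Algebra.traceForm_apply, ← pow_add]
    exact tr (s + t)
  have hfin : Fintype.card (Fin m) = Module.finrank k B := by
    have hmon : f.Monic := monic_X_pow_add_C c (by omega)
    rw [Fintype.card_fin, (AdjoinRoot.powerBasis hmon.ne_zero).finrank,
      AdjoinRoot.powerBasis_dim]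
    simp [hf, natDegree_X_pow_add_C]
  have transfer : ∀ w : Fin m → k,
      QuadraticMap.Equivalent (Algebra.traceForm k B).toQuadraticMap
        (QuadraticMap.weightedSumSquares k w) →
      QuadraticMap.Equivalent (Algebra.traceForm k A).toQuadraticMap
        (QuadraticMap.weightedSumSquares k w) := by
    intro w h
    refine QuadraticMap.Equivalent.trans ⟨⟨e.toLinearEquiv, fun x => ?_⟩⟩ h
    show (Algebra.traceForm k B).toQuadraticMap (e x) = (Algebra.traceForm k A).toQuadraticMap x
    rw [LinearMap.BilinMap.toQuadraticMap_apply, LinearMap.BilinMap.toQuadraticMap_apply,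
      Algebra.traceForm_apply, Algebra.traceForm_apply, ← map_mul]
    exact Algebra.trace_eq_of_algEquiv e (x * x)
  have nd : ∀ x : ℕ, 0 < x → x < 2 * m → x ≠ m → ¬ m ∣ x := fun x h1 h2 h3 =>
    aux_not_dvd h1 h2 h3
  have symmB : ∀ x y : B, Algebra.traceForm k B x y = Algebra.traceForm k B y x := fun x y => by
    rw [Algebra.traceForm_apply, Algebra.traceForm_apply, mul_comm]
  have hmdm : m / m = 1 := Nat.div_self (by omega)
  -- the pair computation
  have pairB : ∀ (p q : ℕ) (α β : k), 1 ≤ p → 1 ≤ q → p + q < m →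
      Algebra.traceForm k B (root f ^ p + α • root f ^ (m - p))
        (root f ^ q + β • root f ^ (m - q))
        = if p = q then (α + β) * (-((m : k) * c)) else 0 := by
    intro p q α β hp hq hpq
    have hpm : p < m := by omega
    have hqm : q < m := by omega
    simp only [map_add, map_smul, LinearMap.add_apply, LinearMap.smul_apply, smul_eq_mul, T2]
    by_cases hpq' : p = q
    · subst hpq'
      have e1 : p + (m - p) = m := by omega
      have e2 : (m - p) + p = m := by omega
      rw [e1, e2, if_pos (dvd_refl m), hmdm, pow_one,
        if_neg (nd (p + p) (by omega) (by omega) (by omega)),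
        if_neg (nd ((m - p) + (m - p)) (by omega) (by omega) (by omega)),
        if_pos rfl]
      ring
    · rw [if_neg (nd (p + q) (by omega) (by omega) (by omega)),
        if_neg (nd (p + (m - q)) (by omega) (by omega) (by omega)),
        if_neg (nd ((m - p) + q) (by omega) (by omega) (by omega)),
        if_neg (nd ((m - p) + (m - q)) (by omega) (by omega) (by omega)),
        if_neg hpq']
      ring
  have oneB : ∀ (q : ℕ) (β : k), 1 ≤ q → q < m →
      Algebra.traceForm k B 1 (root f ^ q + β • root f ^ (m - q)) = 0 := by
    intro q β hq hqm
    rw [show (1 : B) = root f ^ 0 from (pow_zero _).symm]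
    simp only [map_add, map_smul, LinearMap.add_apply, LinearMap.smul_apply, smul_eq_mul, T2]
    rw [if_neg (nd (0 + q) (by omega) (by omega) (by omega)),
      if_neg (nd (0 + (m - q)) (by omega) (by omega) (by omega))]
    ring
  have oneOne : Algebra.traceForm k B 1 1 = (m : k) := by
    rw [show (1 : B) = root f ^ 0 from (pow_zero _).symm, T2]
    simp
  -- the sign coefficients
  set ε : ℕ → k := fun i => if Even i then -(2 * (m : k) * c)⁻¹ else (2 * (m : k) * c)⁻¹
    with hε
  have hmc : 2 * (m : k) * c ≠ 0 := by
    intro h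
    rcases mul_eq_zero.mp h with h' | h'
    · rcases mul_eq_zero.mp h' with h'' | h''
      · exact h2 h''
      · exact hmk h''
    · exact hc0 h'
  have εopp : ∀ i j : ℕ, i % 2 + j % 2 = 1 → ε i + ε j = 0 := by
    intro i j hpar
    by_cases hie : Even i
    · have hje : ¬ Even j := by
        rw [Nat.even_iff] at hie ⊢
        omega
      simp only [hε, if_pos hie, if_neg hje]
      ring
    · have hje : Even j := by
        rw [Nat.even_iff] at hie ⊢
        omega
      simp only [hε, if_neg hie, if_pos hje]
      ring
  have εdiag : ∀ i : ℕ, (ε i + ε i) * (-((m : k) * c)) = if Even i then 1 else -1 := by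
    intro i
    by_cases hie : Even i
    · simp only [hε, if_pos hie]
      field_simp
      ring
    · simp only [hε, if_neg hie]
      field_simp
      ring
  constructor
  · -- odd case
    intro hodd
    have hmo : m % 2 = 1 := Nat.odd_iff.mp hodd
    set v : Fin m → B := fun i => if i.1 = 0 then 1
        else root f ^ ((i.1 + 1) / 2) + ε i.1 • root f ^ (m - (i.1 + 1) / 2) with hv
    have horth : ∀ i j : Fin m, i ≠ j → Algebra.traceForm k B (v i) (v j) = 0 := by
      intro i j hij
      have hi2 := i.2
      have hj2 := j.2
      have hij' : i.1 ≠ j.1 := fun h => hij (Fin.ext h)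
      by_cases hi : i.1 = 0 <;> by_cases hj : j.1 = 0
      · omega
      · simp only [hv, if_pos hi, if_neg hj]
        exact oneB _ _ (by omega) (by omega)
      · simp only [hv, if_neg hi, if_pos hj]
        rw [symmB]
        exact oneB _ _ (by omega) (by omega)
      · simp only [hv, if_neg hi, if_neg hj]
        rw [pairB _ _ _ _ (by omega) (by omega) (by omega)]
        by_cases hJ : (i.1 + 1) / 2 = (j.1 + 1) / 2
        · rw [if_pos hJ, εopp i.1 j.1 (by omega), zero_mul]
        · rw [if_neg hJ]
    have hdiag : ∀ i : Fin m, Algebra.traceForm k B (v i) (v i)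
        = (if i.1 = 0 then (m : k) else if Even i.1 then 1 else -1) := by
      intro i
      have hi2 := i.2
      by_cases hi : i.1 = 0
      · simp only [hv, if_pos hi]
        rw [oneOne]
      · simp only [hv, if_neg hi]
        rw [pairB _ _ _ _ (by omega) (by omega) (by omega), if_pos rfl, εdiag]
    have hw : ∀ i : Fin m,
        (if i.1 = 0 then (m : k) else if Even i.1 then 1 else -1) ≠ 0 := by
      intro i
      split_ifs <;> simp [hmk]
    exact transfer _ (traceForm_equiv_weighted hfin horth hdiag hw)
  · -- even case
    intro heven
    have hme : m % 2 = 0 := Nat.even_iff.mp heven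
    set v : Fin m → B := fun i => if i.1 = 0 then 1
        else if i.1 = 1 then (a : k) • root f ^ (m / 2)
        else root f ^ (i.1 / 2) + ε i.1 • root f ^ (m - i.1 / 2) with hv
    have halfB : ∀ (q : ℕ) (β : k), 1 ≤ q → 2 * q < m →
        Algebra.traceForm k B (root f ^ (m / 2)) (root f ^ q + β • root f ^ (m - q)) = 0 := by
      intro q β hq hqm
      simp only [map_add, map_smul, LinearMap.add_apply, LinearMap.smul_apply, smul_eq_mul, T2]
      rw [if_neg (nd (m / 2 + q) (by omega) (by omega) (by omega)),
        if_neg (nd (m / 2 + (m - q)) (by omega) (by omega) (by omega))]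
      ring
    have halfOne : Algebra.traceForm k B (root f ^ (m / 2)) 1 = 0 := by
      rw [show (1 : B) = root f ^ 0 from (pow_zero _).symm, T2]
      rw [if_neg (nd (m / 2 + 0) (by omega) (by omega) (by omega))]
    have halfHalf : Algebra.traceForm k B (root f ^ (m / 2)) (root f ^ (m / 2))
        = -((m : k) * c) := by
      rw [T2]
      have e1 : m / 2 + m / 2 = m := by omega
      rw [e1, if_pos (dvd_refl m), hmdm, pow_one]
      ring
    have horth : ∀ i j : Fin m, i ≠ j → Algebra.traceForm k B (v i) (v j) = 0 := by
      intro i j hij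
      have hi2 := i.2
      have hj2 := j.2
      have hij' : i.1 ≠ j.1 := fun h => hij (Fin.ext h)
      by_cases hi : i.1 = 0 <;> by_cases hj : j.1 = 0
      · omega
      · by_cases hj1 : j.1 = 1
        · simp only [hv, if_pos hi, if_neg hj, if_pos hj1, map_smul, smul_eq_mul]
          rw [symmB, halfOne, mul_zero]
        · simp only [hv, if_pos hi, if_neg hj, if_neg hj1]
          exact oneB _ _ (by omega) (by omega)
      · by_cases hi1 : i.1 = 1
        · simp only [hv, if_neg hi, if_pos hi1, if_pos hj, map_smul, LinearMap.smul_apply,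
            smul_eq_mul]
          rw [halfOne, mul_zero]
        · simp only [hv, if_neg hi, if_neg hi1, if_pos hj]
          rw [symmB]
          exact oneB _ _ (by omega) (by omega)
      · by_cases hi1 : i.1 = 1 <;> by_cases hj1 : j.1 = 1
        · omega
        · simp only [hv, if_neg hi, if_pos hi1, if_neg hj, if_neg hj1, map_smul,
            LinearMap.smul_apply, smul_eq_mul]
          rw [halfB _ _ (by omega) (by omega), mul_zero]
        · simp only [hv, if_neg hi, if_neg hi1, if_neg hj, if_pos hj1, map_smul, smul_eq_mul]
          rw [symmB, halfB _ _ (by omega) (by omega), mul_zero]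
        · simp only [hv, if_neg hi, if_neg hi1, if_neg hj, if_neg hj1]
          rw [pairB _ _ _ _ (by omega) (by omega) (by omega)]
          by_cases hJ : i.1 / 2 = j.1 / 2
          · rw [if_pos hJ, εopp i.1 j.1 (by omega), zero_mul]
          · rw [if_neg hJ]
    have hdiag : ∀ i : Fin m, Algebra.traceForm k B (v i) (v i)
        = (if i.1 = 0 then (m : k)
            else if i.1 = 1 then -((m : k) * (a : k) * (b : k))
            else if Even i.1 then 1 else -1) := by
      intro i
      have hi2 := i.2
      by_cases hi : i.1 = 0
      · simp only [hv, if_pos hi]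
        rw [oneOne]
      · by_cases hi1 : i.1 = 1
        · simp only [hv, if_neg hi, if_pos hi1, map_smul, LinearMap.smul_apply, smul_eq_mul]
          rw [halfHalf, hc_def]
          field_simp
        · simp only [hv, if_neg hi, if_neg hi1]
          rw [pairB _ _ _ _ (by omega) (by omega) (by omega), if_pos rfl, εdiag]
    have hw : ∀ i : Fin m,
        (if i.1 = 0 then (m : k)
          else if i.1 = 1 then -((m : k) * (a : k) * (b : k))
          else if Even i.1 then 1 else -1) ≠ 0 := by
      intro i
      split_ifs <;> simp [hmk, ha0, hb0]
    exact transfer _ (traceForm_equiv_weighted hfin horth hdiag hw)
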